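/- arXiv:2404.08015 — 3 statements merged into one kernel-verified Lean document; each statement's English description precedes it below -/
import Mathlib

section
/- Let s = (s₁, s₂, s₃, s₄) be a 4-tuple of positive integers, and let a₁, a₂, a₃, a₄ be pairwise coprime positive integers with aᵢ > sᵢ for each i. Define q₁ = a₂a₃a₄, q₂ = a₁a₃a₄, q₃ = a₁a₂a₄, q₄ = a₁a₂a₃. Then for any 4-tuple t of positive integers with q · t = q · s, we have t = s. -/
def dot (q s : Fin 4 → ℕ) : ℕ := ∑ i, q i * s i

lemma aux_nonneg (A dd : ℤ) (hA : 0 < A) (hlow : -A < dd) (hdvd : A ∣ dd) : 0 ≤ dd := by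
  rcases hdvd with ⟨k, rfl⟩
  rcases le_or_gt 0 k with h | h
  · positivity
  · have hk : k ≤ -1 := by omega
    exfalso
    nlinarith [mul_le_mul_of_nonneg_left hk hA.le]

theorem coprime_question_decodes (s a : Fin 4 → ℕ)
    (hs : ∀ i, 0 < s i) (ha : ∀ i, 0 < a i)
    (hcop : ∀ i j, i ≠ j → Nat.Coprime (a i) (a j))
    (hgt : ∀ i, s i < a i)
    (q : Fin 4 → ℕ)
    (hq0 : q 0 = a 1 * a 2 * a 3) (hq1 : q 1 = a 0 * a 2 * a 3)
    (hq2 : q 2 = a 0 * a 1 * a 3) (hq3 : q 3 = a 0 * a 1 * a 2)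
    (t : Fin 4 → ℕ) (ht : ∀ i, 0 < t i)
    (heq : dot q t = dot q s) : t = s := by
  set d : Fin 4 → ℤ := fun i => (t i : ℤ) - s i with hd
  have h' : (q 0 : ℤ) * t 0 + q 1 * t 1 + q 2 * t 2 + q 3 * t 3
      = (q 0 : ℤ) * s 0 + q 1 * s 1 + q 2 * s 2 + q 3 * s 3 := by
    have h := heq
    simp only [dot, Fin.sum_univ_four] at h
    exact_mod_cast h
  have heq' : (q 0 : ℤ) * d 0 + q 1 * d 1 + q 2 * d 2 + q 3 * d 3 = 0 := by
    simp only [hd]; ring_nf; ring_nf at h'; linarith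
  -- coprimality over ℤ
  have hc0 : IsCoprime ((a 0 : ℤ)) (q 0) := by
    rw [Int.isCoprime_iff_gcd_eq_one, hq0, Int.gcd_natCast_natCast]
    exact ((hcop 0 1 (by decide)).mul_right (hcop 0 2 (by decide))).mul_right
      (hcop 0 3 (by decide))
  have hc1 : IsCoprime ((a 1 : ℤ)) (q 1) := by
    rw [Int.isCoprime_iff_gcd_eq_one, hq1, Int.gcd_natCast_natCast]
    exact ((hcop 1 0 (by decide)).mul_right (hcop 1 2 (by decide))).mul_right
      (hcop 1 3 (by decide))
  have hc2 : IsCoprime ((a 2 : ℤ)) (q 2) := by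
    rw [Int.isCoprime_iff_gcd_eq_one, hq2, Int.gcd_natCast_natCast]
    exact ((hcop 2 0 (by decide)).mul_right (hcop 2 1 (by decide))).mul_right
      (hcop 2 3 (by decide))
  have hc3 : IsCoprime ((a 3 : ℤ)) (q 3) := by
    rw [Int.isCoprime_iff_gcd_eq_one, hq3, Int.gcd_natCast_natCast]
    exact ((hcop 3 0 (by decide)).mul_right (hcop 3 1 (by decide))).mul_right
      (hcop 3 2 (by decide))
  -- divisibilities a i ∣ q j for i ≠ j (as integers)
  have D : ∀ (i j : Fin 4), (∃ c : ℤ, (q j : ℤ) = (a i : ℤ) * c) → (a i : ℤ) ∣ (q j : ℤ) :=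
    fun i j h => h
  have d01 : (a 0 : ℤ) ∣ (q 1 : ℤ) := by rw [hq1]; push_cast; exact ⟨(a 2 : ℤ) * a 3, by ring⟩
  have d02 : (a 0 : ℤ) ∣ (q 2 : ℤ) := by rw [hq2]; push_cast; exact ⟨(a 1 : ℤ) * a 3, by ring⟩
  have d03 : (a 0 : ℤ) ∣ (q 3 : ℤ) := by rw [hq3]; push_cast; exact ⟨(a 1 : ℤ) * a 2, by ring⟩
  have d10 : (a 1 : ℤ) ∣ (q 0 : ℤ) := by rw [hq0]; push_cast; exact ⟨(a 2 : ℤ) * a 3, by ring⟩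
  have d12 : (a 1 : ℤ) ∣ (q 2 : ℤ) := by rw [hq2]; push_cast; exact ⟨(a 0 : ℤ) * a 3, by ring⟩
  have d13 : (a 1 : ℤ) ∣ (q 3 : ℤ) := by rw [hq3]; push_cast; exact ⟨(a 0 : ℤ) * a 2, by ring⟩
  have d20 : (a 2 : ℤ) ∣ (q 0 : ℤ) := by rw [hq0]; push_cast; exact ⟨(a 1 : ℤ) * a 3, by ring⟩
  have d21 : (a 2 : ℤ) ∣ (q 1 : ℤ) := by rw [hq1]; push_cast; exact ⟨(a 0 : ℤ) * a 3, by ring⟩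
  have d23 : (a 2 : ℤ) ∣ (q 3 : ℤ) := by rw [hq3]; push_cast; exact ⟨(a 0 : ℤ) * a 1, by ring⟩
  have d30 : (a 3 : ℤ) ∣ (q 0 : ℤ) := by rw [hq0]; push_cast; exact ⟨(a 1 : ℤ) * a 2, by ring⟩
  have d31 : (a 3 : ℤ) ∣ (q 1 : ℤ) := by rw [hq1]; push_cast; exact ⟨(a 0 : ℤ) * a 2, by ring⟩
  have d32 : (a 3 : ℤ) ∣ (q 2 : ℤ) := by rw [hq2]; push_cast; exact ⟨(a 0 : ℤ) * a 1, by ring⟩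
  -- a i ∣ d i
  have hdvd0 : (a 0 : ℤ) ∣ d 0 := by
    refine hc0.dvd_of_dvd_mul_left ?_
    have e : (q 0 : ℤ) * d 0 = -((q 1 : ℤ) * d 1 + q 2 * d 2 + q 3 * d 3) := by linarith
    rw [e]
    exact dvd_neg.mpr (dvd_add (dvd_add (d01.mul_right _) (d02.mul_right _)) (d03.mul_right _))
  have hdvd1 : (a 1 : ℤ) ∣ d 1 := by
    refine hc1.dvd_of_dvd_mul_left ?_
    have e : (q 1 : ℤ) * d 1 = -((q 0 : ℤ) * d 0 + q 2 * d 2 + q 3 * d 3) := by linarith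
    rw [e]
    exact dvd_neg.mpr (dvd_add (dvd_add (d10.mul_right _) (d12.mul_right _)) (d13.mul_right _))
  have hdvd2 : (a 2 : ℤ) ∣ d 2 := by
    refine hc2.dvd_of_dvd_mul_left ?_
    have e : (q 2 : ℤ) * d 2 = -((q 0 : ℤ) * d 0 + q 1 * d 1 + q 3 * d 3) := by linarith
    rw [e]
    exact dvd_neg.mpr (dvd_add (dvd_add (d20.mul_right _) (d21.mul_right _)) (d23.mul_right _))
  have hdvd3 : (a 3 : ℤ) ∣ d 3 := by
    refine hc3.dvd_of_dvd_mul_left ?_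
    have e : (q 3 : ℤ) * d 3 = -((q 0 : ℤ) * d 0 + q 1 * d 1 + q 2 * d 2) := by linarith
    rw [e]
    exact dvd_neg.mpr (dvd_add (dvd_add (d30.mul_right _) (d31.mul_right _)) (d32.mul_right _))
  -- bounds
  have hlow : ∀ i : Fin 4, -(a i : ℤ) < d i := by
    intro i
    have h1 : (1 : ℤ) ≤ t i := by exact_mod_cast ht i
    have h2 : (s i : ℤ) < a i := by exact_mod_cast hgt i
    simp only [hd]; linarith
  have hApos : ∀ i : Fin 4, (0 : ℤ) < a i := fun i => by exact_mod_cast ha i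
  have hnn0 : 0 ≤ d 0 := aux_nonneg _ _ (hApos 0) (hlow 0) hdvd0
  have hnn1 : 0 ≤ d 1 := aux_nonneg _ _ (hApos 1) (hlow 1) hdvd1
  have hnn2 : 0 ≤ d 2 := aux_nonneg _ _ (hApos 2) (hlow 2) hdvd2
  have hnn3 : 0 ≤ d 3 := aux_nonneg _ _ (hApos 3) (hlow 3) hdvd3
  -- positivity of q
  have hqp0 : (0 : ℤ) < q 0 := by
    have : 0 < q 0 := by rw [hq0]; exact Nat.mul_pos (Nat.mul_pos (ha 1) (ha 2)) (ha 3)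
    exact_mod_cast this
  have hqp1 : (0 : ℤ) < q 1 := by
    have : 0 < q 1 := by rw [hq1]; exact Nat.mul_pos (Nat.mul_pos (ha 0) (ha 2)) (ha 3)
    exact_mod_cast this
  have hqp2 : (0 : ℤ) < q 2 := by
    have : 0 < q 2 := by rw [hq2]; exact Nat.mul_pos (Nat.mul_pos (ha 0) (ha 1)) (ha 3)
    exact_mod_cast this
  have hqp3 : (0 : ℤ) < q 3 := by
    have : 0 < q 3 := by rw [hq3]; exact Nat.mul_pos (Nat.mul_pos (ha 0) (ha 1)) (ha 2)
    exact_mod_cast this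
  have ht0 : (0 : ℤ) ≤ q 0 * d 0 := mul_nonneg hqp0.le hnn0
  have ht1 : (0 : ℤ) ≤ q 1 * d 1 := mul_nonneg hqp1.le hnn1
  have ht2 : (0 : ℤ) ≤ q 2 * d 2 := mul_nonneg hqp2.le hnn2
  have ht3 : (0 : ℤ) ≤ q 3 * d 3 := mul_nonneg hqp3.le hnn3
  have z0 : (q 0 : ℤ) * d 0 = 0 := by linarith
  have z1 : (q 1 : ℤ) * d 1 = 0 := by linarith
  have z2 : (q 2 : ℤ) * d 2 = 0 := by linarith
  have z3 : (q 3 : ℤ) * d 3 = 0 := by linarith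
  have e0 : t 0 = s 0 := by
    rcases mul_eq_zero.mp z0 with h | h
    · exact absurd h hqp0.ne'
    · simp only [hd] at h; omega
  have e1 : t 1 = s 1 := by
    rcases mul_eq_zero.mp z1 with h | h
    · exact absurd h hqp1.ne'
    · simp only [hd] at h; omega
  have e2 : t 2 = s 2 := by
    rcases mul_eq_zero.mp z2 with h | h
    · exact absurd h hqp2.ne'
    · simp only [hd] at h; omega
  have e3 : t 3 = s 3 := by
    rcases mul_eq_zero.mp z3 with h | h
    · exact absurd h hqp3.ne'
    · simp only [hd] at h; omega
  funext i
  fin_cases i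
  · exact e0
  · exact e1
  · exact e2
  · exact e3
end

section
/- For every 4-tuple q of positive integers and every 4-tuple s of positive integers, there exists a second question q' (a 4-tuple of positive integers, which may depend on q and on the answer q · s) such that for all 4-tuples t of positive integers, if q · t = q · s and q' · t = q' · s then t = s. That is, any first question together with a carefully chosen follow-up question suffices to determine any secret. -/
lemma digit_cancel (B a b x y : ℕ) (ha : a < B) (hb : b < B)
    (h : a + B * x = b + B * y) : a = b ∧ x = y := by
  have hmod : (a + B * x) % B = (b + B * y) % B := by rw [h]
  rw [Nat.add_mul_mod_self_left, Nat.add_mul_mod_self_left,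
    Nat.mod_eq_of_lt ha, Nat.mod_eq_of_lt hb] at hmod
  refine ⟨hmod, ?_⟩
  have hB : 0 < B := lt_of_le_of_lt (Nat.zero_le _) ha
  have : B * x = B * y := by omega
  exact Nat.eq_of_mul_eq_mul_left hB this

lemma dot_pow_expand (B : ℕ) (u : Fin 4 → ℕ) :
    dot (fun i => B ^ (i : ℕ)) u = u 0 + B * (u 1 + B * (u 2 + B * u 3)) := by
  have : ((3 : Fin 4) : ℕ) = 3 := rfl
  simp [dot, Fin.sum_univ_four, this]
  ring

theorem followup_question_suffices
    (q s : Fin 4 → ℕ) (hq : ∀ i, 0 < q i) (hs : ∀ i, 0 < s i) :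
    ∃ q' : Fin 4 → ℕ, (∀ i, 0 < q' i) ∧
      ∀ t : Fin 4 → ℕ, (∀ i, 0 < t i) →
        dot q t = dot q s → dot q' t = dot q' s → t = s := by
  set B := dot q s + 1 with hB
  refine ⟨fun i => B ^ (i : ℕ), fun i => Nat.pow_pos (by omega), ?_⟩
  intro t ht h1 h2
  have hbound : ∀ (u : Fin 4 → ℕ), dot q u = dot q s → ∀ i, u i < B := by
    intro u hu i
    have : u i ≤ dot q u := by
      calc u i ≤ q i * u i := Nat.le_mul_of_pos_left _ (hq i)
        _ ≤ dot q u := Finset.single_le_sum (f := fun j => q j * u j)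
            (fun j _ => Nat.zero_le _) (Finset.mem_univ i)
    omega
  have hts : ∀ i, t i < B := hbound t h1
  have hss : ∀ i, s i < B := hbound s rfl
  rw [dot_pow_expand, dot_pow_expand] at h2
  obtain ⟨e0, h2⟩ := digit_cancel B _ _ _ _ (hts 0) (hss 0) h2
  obtain ⟨e1, h2⟩ := digit_cancel B _ _ _ _ (hts 1) (hss 1) h2
  obtain ⟨e2, e3⟩ := digit_cancel B _ _ _ _ (hts 2) (hss 2) h2
  funext i
  fin_cases i <;> assumption
end

section
/- For any n ≥ 1 and any n-tuple s of positive integers, there exists an n-tuple q of positive integers such that every n-tuple t of positive integers with q · t = q · s equals s. -/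
theorem no_unbreakable_secret_general (n : ℕ) (hn : 1 ≤ n)
    (s : Fin n → ℕ) (hs : ∀ i, 0 < s i) :
    ∃ q : Fin n → ℕ, (∀ i, 0 < q i) ∧
      ∀ t : Fin n → ℕ, (∀ i, 0 < t i) →
        ∑ i, q i * t i = ∑ i, q i * s i → t = s := by
  classical
  set S : ℕ := ∑ i, s i with hS
  set a : Fin n → ℕ := fun i => Nat.fermatNumber (n * S + i.val) with ha
  set q : Fin n → ℕ := fun i => ∏ j ∈ Finset.univ.erase i, a j with hq
  have hapos : ∀ i, 0 < a i := fun i => by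
    have := Nat.three_le_fermatNumber (n * S + i.val); simp only [ha]; omega
  have hfgt : ∀ m : ℕ, m < Nat.fermatNumber m := fun m => by
    have h1 : m < 2 ^ m := Nat.lt_two_pow_self (n := m)
    have h2 : 2 ^ m ≤ 2 ^ (2 ^ m) := Nat.pow_le_pow_right (by norm_num) (Nat.le_of_lt (Nat.lt_two_pow_self (n := m)))
    simp only [Nat.fermatNumber]; omega
  have hsleS : ∀ i, s i ≤ S := fun i =>
    Finset.single_le_sum (fun j _ => Nat.zero_le (s j)) (Finset.mem_univ i)
  have hagt : ∀ i, n * s i < a i := fun i => by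
    have h1 : n * s i ≤ n * S := Nat.mul_le_mul_left n (hsleS i)
    have h2 := hfgt (n * S + i.val)
    simp only [ha]; omega
  have hcop : ∀ i j : Fin n, i ≠ j → Nat.Coprime (a i) (a j) := fun i j hij => by
    apply Nat.coprime_fermatNumber_fermatNumber
    have : i.val ≠ j.val := fun h => hij (Fin.ext h)
    omega
  have hqa : ∀ i, q i * a i = ∏ j, a j := fun i => by
    simp only [hq]
    rw [Finset.prod_erase_mul _ _ (Finset.mem_univ i)]
  have hqpos : ∀ i, 0 < q i := fun i =>
    Finset.prod_pos (fun j _ => hapos j)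
  have hdvd : ∀ i j : Fin n, i ≠ j → a i ∣ q j := fun i j hij => by
    simp only [hq]
    exact Finset.dvd_prod_of_mem a (Finset.mem_erase.mpr ⟨hij, Finset.mem_univ i⟩)
  have hqcop : ∀ i, Nat.Coprime (q i) (a i) := fun i => by
    simp only [hq]
    apply Nat.Coprime.prod_left
    intro j hj
    exact hcop j i (Finset.mem_erase.mp hj).1
  -- key bound: ∑ q j * s j < ∏ a j
  have hbound : ∑ j, q j * s j < ∏ j, a j := by
    have hkey : ∀ j : Fin n, n * (q j * s j) < ∏ k, a k := fun j => by
      rw [← hqa j]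
      calc n * (q j * s j) = q j * (n * s j) := by ring
        _ < q j * a j := Nat.mul_lt_mul_of_pos_left (hagt j) (hqpos j)
    have hnonempty : (Finset.univ : Finset (Fin n)).Nonempty := by
      rw [Finset.univ_nonempty_iff]
      exact Fin.pos_iff_nonempty.mp hn
    have := Finset.sum_lt_sum_of_nonempty hnonempty (fun j _ => hkey j)
    rw [← Finset.mul_sum, Finset.sum_const, Finset.card_univ, Fintype.card_fin,
      smul_eq_mul] at this
    exact lt_of_mul_lt_mul_left this (Nat.zero_le n)
  refine ⟨q, hqpos, fun t ht hsum => ?_⟩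
  funext i
  -- modular equation
  have hmod : ∀ u : Fin n → ℕ, ∑ j, q j * u j ≡ q i * u i [MOD a i] := fun u => by
    rw [← Finset.add_sum_erase _ _ (Finset.mem_univ i)]
    have hd : a i ∣ ∑ j ∈ Finset.univ.erase i, q j * u j := by
      apply Finset.dvd_sum
      intro j hj
      exact Dvd.dvd.mul_right (hdvd i j (Ne.symm (Finset.mem_erase.mp hj).1)) _
    calc q i * u i + ∑ j ∈ Finset.univ.erase i, q j * u j
        ≡ q i * u i + 0 [MOD a i] :=
          Nat.ModEq.add_left _ ((Nat.modEq_zero_iff_dvd).mpr hd)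
      _ = q i * u i := by ring
  have hmod2 : q i * t i ≡ q i * s i [MOD a i] :=
    ((hmod t).symm.trans (hsum ▸ hmod s)).symm.symm
  have hmod3 : t i ≡ s i [MOD a i] :=
    Nat.ModEq.cancel_left_of_coprime ((hqcop i).symm) hmod2
  have hslt : s i < a i := by
    have := hagt i
    have : s i ≤ n * s i := Nat.le_mul_of_pos_left _ hn
    omega
  have htlt : t i < a i := by
    have h1 : q i * t i ≤ ∑ j, q j * t j :=
      Finset.single_le_sum (f := fun j => q j * t j) (fun j _ => Nat.zero_le _) (Finset.mem_univ i)
    rw [hsum] at h1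
    have h2 : q i * t i < q i * a i := by rw [hqa i]; exact lt_of_le_of_lt h1 hbound
    exact lt_of_mul_lt_mul_left h2 (Nat.zero_le _)
  have := hmod3
  unfold Nat.ModEq at this
  rwa [Nat.mod_eq_of_lt htlt, Nat.mod_eq_of_lt hslt] at this
end
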